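/- arXiv:1203.1742 — 2 statements merged into one kernel-verified Lean document; each statement's English description precedes it below -/
import Mathlib

section
/- Let ε > 0. For (x,y) ∈ D(1) with α = α(x,y) satisfying α > 3/4 + ε/3, and C ≥ x, one has ∑_{q ≤ C^{1/4}} (φ(q₀)/φ(q₁))·q₀^{−1−α+ε/3} ≪_ε C^{ε/3}, where each q is written uniquely as q = q₀q₁ with P⁺(q₀) ≤ y and P⁻(q₁) > y. -/
namespace Friable

open scoped Classical BigOperators

noncomputable section

/-- All prime factors of `n` are at most `y` (i.e. `P⁺(n) ≤ y`). -/
def SmoothNum (y : ℝ) (n : ℕ) : Prop := ∀ p : ℕ, p.Prime → p ∣ n → (p : ℝ) ≤ y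

/-- `Ψ(x,y)`: the number of `y`-smooth integers in `[1,x]`. -/
def Psi (x y : ℝ) : ℕ := ((Finset.Icc 1 ⌊x⌋₊).filter fun n => SmoothNum y n).card

/-- `a` is the (positive) saddle point `α(x,y)`:
`∑_{p ≤ y} log p / (p^a - 1) = log x`. -/
def SaddleEq (x y a : ℝ) : Prop :=
  0 < a ∧
    ∑ p ∈ (Finset.range (⌊y⌋₊ + 1)).filter Nat.Prime,
      Real.log p / ((p : ℝ) ^ a - 1) = Real.log x

/-- `H(u) = exp(u / (log(u+1))²)`. -/
def Hfun (u : ℝ) : ℝ := Real.exp (u / (Real.log (u + 1)) ^ 2)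

/-- The domain `D(κ)`: `2 ≤ (log x)^κ ≤ y ≤ x`. -/
def Dom (κ x y : ℝ) : Prop :=
  2 ≤ (Real.log x) ^ κ ∧ (Real.log x) ^ κ ≤ y ∧ y ≤ x

/-- The domain `D*(κ,c₀)`: `D(κ)` together with `(log y)·H(u)^{-c₀} ≤ 1`. -/
def DomStar (κ c₀ x y : ℝ) : Prop :=
  Dom κ x y ∧ Real.log y * Hfun (Real.log x / Real.log y) ^ (-c₀) ≤ 1

/-- The Generalised Riemann Hypothesis: RH for `ζ` together with the statement that
all zeros of Dirichlet L-functions in the critical strip lie on the critical line. -/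
def GRH : Prop :=
  RiemannHypothesis ∧
    ∀ (N : ℕ) [NeZero N] (χ : DirichletCharacter ℂ N) (s : ℂ),
      0 < s.re → s.re < 1 → DirichletCharacter.LFunction χ s = 0 → s.re = 1 / 2

/-- `e(t) = exp(2πit)`. -/
def eC (t : ℝ) : ℂ := Complex.exp (2 * Real.pi * Complex.I * t)

/-- The singular integral `𝔖₀(Φ,α)` (complex-valued weight). -/
def S0 (Φ : ℝ → ℂ) (a : ℝ) : ℂ :=
  (a : ℂ) ^ 3 *
    ∫ t : ℝ × ℝ in Set.Ioi (0:ℝ) ×ˢ Set.Ioi (0:ℝ),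
      Φ t.1 * Φ t.2 * Φ (t.1 + t.2) * (((t.1 * t.2 * (t.1 + t.2)) ^ (a - 1) : ℝ) : ℂ)

/-- The singular integral `𝔖₀(Φ,α)` (real-valued weight). -/
def S0R (Φ : ℝ → ℝ) (a : ℝ) : ℝ :=
  a ^ 3 *
    ∫ t : ℝ × ℝ in Set.Ioi (0:ℝ) ×ˢ Set.Ioi (0:ℝ),
      Φ t.1 * Φ t.2 * Φ (t.1 + t.2) * (t.1 * t.2 * (t.1 + t.2)) ^ (a - 1)

/-- The indicator function of `(0,1]`. -/
def ind : ℝ → ℝ := Set.indicator (Set.Ioc (0:ℝ) 1) fun _ => 1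

/-- The singular series `𝔖₁(α)`. -/
def S1 (a : ℝ) : ℝ :=
  ∏' p : Nat.Primes,
    (1 + ((p.1 : ℝ) - 1) / ((p.1 : ℝ) * ((p.1 : ℝ) ^ (3 * a - 1) - 1)) *
      (((p.1 : ℝ) - (p.1 : ℝ) ^ a) / ((p.1 : ℝ) - 1)) ^ 3)

/-- `N(x,y;Φ)`: smoothly weighted count of `y`-smooth solutions of `a + b = c`. -/
def NW (x y : ℝ) (Φ : ℝ → ℂ) : ℂ :=
  ∑' ab : ℕ × ℕ,
    if SmoothNum y (ab.1 * ab.2 * (ab.1 + ab.2)) then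
      Φ (ab.1 / x) * Φ (ab.2 / x) * Φ ((ab.1 + ab.2) / x)
    else 0

/-- `N*(x,y;Φ)`: weighted count of primitive `y`-smooth solutions of `a + b = c`. -/
def NWstar (x y : ℝ) (Φ : ℝ → ℂ) : ℂ :=
  ∑' ab : ℕ × ℕ,
    if SmoothNum y (ab.1 * ab.2 * (ab.1 + ab.2)) ∧
        Nat.gcd (Nat.gcd ab.1 ab.2) (ab.1 + ab.2) = 1 then
      Φ (ab.1 / x) * Φ (ab.2 / x) * Φ ((ab.1 + ab.2) / x)
    else 0

/-- `N(x,y)`: the number of `y`-smooth solutions of `a+b=c` with `a,b,c ∈ S(x,y)`. -/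
def Ncount (x y : ℝ) : ℕ :=
  (((Finset.Icc 1 ⌊x⌋₊) ×ˢ (Finset.Icc 1 ⌊x⌋₊) ×ˢ (Finset.Icc 1 ⌊x⌋₊)).filter
    fun t => SmoothNum y t.1 ∧ SmoothNum y t.2.1 ∧ SmoothNum y t.2.2 ∧ t.1 + t.2.1 = t.2.2).card

/-- `N*(x,y)`: the number of primitive `y`-smooth solutions of `a+b=c`. -/
def NcountStar (x y : ℝ) : ℕ :=
  (((Finset.Icc 1 ⌊x⌋₊) ×ˢ (Finset.Icc 1 ⌊x⌋₊) ×ˢ (Finset.Icc 1 ⌊x⌋₊)).filter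
    fun t => SmoothNum y t.1 ∧ SmoothNum y t.2.1 ∧ SmoothNum y t.2.2 ∧
      Nat.gcd (Nat.gcd t.1 t.2.1) t.2.2 = 1 ∧ t.1 + t.2.1 = t.2.2).card

/-- `ζ(s,y) = ∑_{P⁺(n) ≤ y} n^{-s}` (complex `s`). -/
def zetaC (s : ℂ) (y : ℝ) : ℂ := ∑' n : ℕ, if SmoothNum y n then (n : ℂ) ^ (-s) else 0

/-- `ζ(s,y) = ∏_{p ≤ y} (1 - p^{-s})⁻¹` (real `s`). -/
def zetaR (s y : ℝ) : ℝ :=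
  ∏ p ∈ (Finset.range (⌊y⌋₊ + 1)).filter Nat.Prime, (1 - (p : ℝ) ^ (-s))⁻¹

/-- `ζ(s,y) = ∏_{p ≤ y} (1 - p^{-s})⁻¹` (complex `s`). -/
def zetaCprod (s : ℂ) (y : ℝ) : ℂ :=
  ∏ p ∈ (Finset.range (⌊y⌋₊ + 1)).filter Nat.Prime, (1 - (p : ℂ) ^ (-s))⁻¹

/-- The exponential sum `E_Φ(x,y;ϑ)`. -/
def EPhi (Φ : ℝ → ℂ) (x y ϑ : ℝ) : ℂ :=
  ∑' n : ℕ, if SmoothNum y n then eC (n * ϑ) * Φ (n / x) else 0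

/-- The main term `M_Φ(x,y;q,β)`. -/
def MPhi (Φ : ℝ → ℂ) (x y : ℝ) (q : ℕ) (β : ℝ) : ℂ :=
  ∑' n : ℕ,
    if SmoothNum y n then
      ((ArithmeticFunction.moebius (q / Nat.gcd q n) : ℤ) : ℂ) /
          (Nat.totient (q / Nat.gcd q n) : ℂ) * eC (n * β) * Φ (n / x)
    else 0

/-- The Fourier–Mellin transform `Φ̌(λ,s) = ∫₀^∞ Φ(t) e(λt) t^{s-1} dt`. -/
def FM (Φ : ℝ → ℂ) (lam : ℝ) (s : ℂ) : ℂ :=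
  ∫ t in Set.Ioi (0:ℝ), Φ t * eC (lam * t) * (t : ℂ) ^ (s - 1)

/-- The model main term `M̃_Φ(x,y;q₀,β)`. -/
def MTilde (Φ : ℝ → ℂ) (x y : ℝ) (q₀ : ℕ) (β a : ℝ) : ℂ :=
  (a : ℂ) * (((q₀ : ℝ) ^ (-a) : ℝ) : ℂ) *
    (∏ p ∈ q₀.primeFactors, ((1 : ℂ) - ((((p : ℝ) ^ a - 1) / ((p : ℝ) - 1) : ℝ) : ℂ))) *
    FM Φ (β * x) (a : ℂ) * (Psi x y : ℂ)

/-- `N(A,B,C,y;Φ)`: weighted count with three different scaling parameters. -/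
def NW3 (A B C y : ℝ) (Φ : ℝ → ℂ) : ℂ :=
  ∑' ab : ℕ × ℕ,
    if SmoothNum y (ab.1 * ab.2 * (ab.1 + ab.2)) then
      Φ (ab.1 / A) * Φ (ab.2 / B) * Φ ((ab.1 + ab.2) / C)
    else 0

/-- The singular integral `𝔖₀(Φ; A,B,C,y)`. -/
def S0gen (Φ : ℝ → ℂ) (A B C aA aB aC : ℝ) : ℂ :=
  ((aA * aB * aC : ℝ) : ℂ) *
    ∫ t : ℝ × ℝ in Set.Ioi (0:ℝ) ×ˢ Set.Ioi (0:ℝ),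
      Φ t.1 * Φ t.2 * Φ (A / C * t.1 + B / C * t.2) *
        (((t.1 ^ (aA - 1) * t.2 ^ (aB - 1) *
          (A / C * t.1 + B / C * t.2) ^ (aC - 1) : ℝ)) : ℂ)

/-- The singular series `𝔖₁(A,B,C,y)`. -/
def S1gen (aA aB aC : ℝ) : ℝ :=
  ∏' p : Nat.Primes,
    (1 + ((p.1 : ℝ) - 1) * ((p.1 : ℝ) - (p.1 : ℝ) ^ aA) * ((p.1 : ℝ) - (p.1 : ℝ) ^ aB) *
        ((p.1 : ℝ) - (p.1 : ℝ) ^ aC) /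
      ((p.1 : ℝ) * ((p.1 : ℝ) ^ (aA + aB + aC - 1) - 1) * ((p.1 : ℝ) - 1) ^ 3))

/-- The smooth-truncated Dirichlet L-function `L(s,χ;y) = ∑_{P⁺(n) ≤ y} χ(n) n^{-s}`. -/
def Lsm {q : ℕ} (χ : DirichletCharacter ℂ q) (s : ℂ) (y : ℝ) : ℂ :=
  ∑' n : ℕ, if SmoothNum y n then χ (n : ZMod q) * (n : ℂ) ^ (-s) else 0

/-- The `y`-smooth part `q₀` of `q` (product of prime powers with `p ≤ y`). -/
def smoothPart (y : ℝ) (q : ℕ) : ℕ :=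
  ∏ p ∈ q.primeFactors.filter (fun p : ℕ => (p : ℝ) ≤ y), p ^ q.factorization p

/-- The `y`-rough part `q₁` of `q` (so that `q = q₀ q₁`). -/
def roughPart (y : ℝ) (q : ℕ) : ℕ := q / smoothPart y q

/-! ### Auxiliary lemmas for `sum_smooth_rough_parts` -/

lemma Aux.le_card_mul_totient (n : ℕ) (hn : 0 < n) :
    n ≤ n.divisors.card * n.totient := by
  conv_lhs => rw [← Nat.sum_totient n]
  calc n.divisors.sum Nat.totient ≤ n.divisors.card • n.totient := by
        refine Finset.sum_le_card_nsmul _ _ _ ?_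
        intro d hd
        rcases Nat.mem_divisors.mp hd with ⟨hdvd, hne⟩
        exact Nat.le_of_dvd (Nat.totient_pos.mpr hn) (Nat.totient_dvd_of_dvd hdvd)
    _ = n.divisors.card * n.totient := by rw [smul_eq_mul]

lemma Aux.card_divisorsAntidiagonal (n : ℕ) :
    n.divisorsAntidiagonal.card = n.divisors.card := by
  rw [← Nat.image_fst_divisorsAntidiagonal]
  refine (Finset.card_image_of_injOn ?_).symm
  intro u hu v hv huv
  obtain ⟨hu1, hu0⟩ := Nat.mem_divisorsAntidiagonal.mp hu
  obtain ⟨hv1, hv0⟩ := Nat.mem_divisorsAntidiagonal.mp hv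
  have hu2 : u.1 ≠ 0 := by
    rintro h; rw [h, zero_mul] at hu1; exact hu0 hu1.symm
  have h2 : u.2 = v.2 := by
    apply Nat.eq_of_mul_eq_mul_left (Nat.pos_of_ne_zero hu2)
    rw [hu1, huv, hv1]
  exact Prod.ext huv h2

lemma Aux.sum_card_divisors_div_le (Q : ℕ) :
    ∑ n ∈ Finset.Icc 1 Q, (n.divisors.card : ℝ) / n
      ≤ (∑ m ∈ Finset.Icc 1 Q, (1 : ℝ) / m) ^ 2 := by
  have hstep : ∀ n ∈ Finset.Icc 1 Q, (n.divisors.card : ℝ) / n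
      = ∑ u ∈ n.divisorsAntidiagonal, (1 : ℝ) / u.1 * (1 / u.2) := by
    intro n hn
    have h1 : ∀ u ∈ n.divisorsAntidiagonal, (1 : ℝ) / u.1 * (1 / u.2) = 1 / n := by
      intro u hu
      obtain ⟨hu1, -⟩ := Nat.mem_divisorsAntidiagonal.mp hu
      rw [div_mul_div_comm, one_mul, ← hu1]
      push_cast
      ring
    rw [Finset.sum_congr rfl h1, Finset.sum_const, Aux.card_divisorsAntidiagonal,
      nsmul_eq_mul, mul_one_div]
  rw [Finset.sum_congr rfl hstep]
  have hdisj : (↑(Finset.Icc 1 Q) : Set ℕ).PairwiseDisjoint Nat.divisorsAntidiagonal := by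
    intro m hm n hn hmn
    refine Finset.disjoint_left.mpr ?_
    intro u hum hun
    obtain ⟨h1, -⟩ := Nat.mem_divisorsAntidiagonal.mp hum
    obtain ⟨h2, -⟩ := Nat.mem_divisorsAntidiagonal.mp hun
    exact hmn (h1.symm.trans h2)
  rw [← Finset.sum_biUnion hdisj]
  have hsub : (Finset.Icc 1 Q).biUnion Nat.divisorsAntidiagonal
      ⊆ Finset.Icc 1 Q ×ˢ Finset.Icc 1 Q := by
    intro u hu
    obtain ⟨n, hn, hun⟩ := Finset.mem_biUnion.mp hu
    obtain ⟨hn1, hnQ⟩ := Finset.mem_Icc.mp hn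
    obtain ⟨h1, h0⟩ := Nat.mem_divisorsAntidiagonal.mp hun
    have hu1 : u.1 ∣ n := ⟨u.2, h1.symm⟩
    have hu2 : u.2 ∣ n := ⟨u.1, by rw [← h1, mul_comm]⟩
    have hnpos : 0 < n := Nat.pos_of_ne_zero h0
    refine Finset.mem_product.mpr ⟨Finset.mem_Icc.mpr ⟨?_, (Nat.le_of_dvd hnpos hu1).trans hnQ⟩,
      Finset.mem_Icc.mpr ⟨?_, (Nat.le_of_dvd hnpos hu2).trans hnQ⟩⟩
    · exact Nat.pos_of_dvd_of_pos hu1 hnpos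
    · exact Nat.pos_of_dvd_of_pos hu2 hnpos
  calc ∑ u ∈ (Finset.Icc 1 Q).biUnion Nat.divisorsAntidiagonal, (1 : ℝ) / u.1 * (1 / u.2)
      ≤ ∑ u ∈ Finset.Icc 1 Q ×ˢ Finset.Icc 1 Q, (1 : ℝ) / u.1 * (1 / u.2) := by
        refine Finset.sum_le_sum_of_subset_of_nonneg hsub ?_
        intro u _ _
        positivity
    _ = (∑ m ∈ Finset.Icc 1 Q, (1 : ℝ) / m) ^ 2 := by
        rw [sq, Finset.sum_mul_sum, Finset.sum_product]

lemma Aux.smoothPart_dvd (y : ℝ) {q : ℕ} (hq : q ≠ 0) : smoothPart y q ∣ q := by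
  have h := Nat.factorization_prod_pow_eq_self hq
  calc smoothPart y q ∣ ∏ p ∈ q.primeFactors, p ^ q.factorization p :=
        Finset.prod_dvd_prod_of_subset _ _ _ (Finset.filter_subset _ _)
    _ = q := by
        rw [← Nat.support_factorization]
        exact h

lemma Aux.smoothPart_pos (y : ℝ) (q : ℕ) : 0 < smoothPart y q := by
  refine Finset.prod_pos ?_
  intro p hp
  have hprime : p.Prime := Nat.prime_of_mem_primeFactors (Finset.mem_filter.mp hp).1
  exact pow_pos hprime.pos _

lemma Aux.smoothNum_smoothPart (y : ℝ) (q : ℕ) : SmoothNum y (smoothPart y q) := by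
  intro p hp hdvd
  obtain ⟨r, hr, hdvd'⟩ := hp.prime.exists_mem_finset_dvd hdvd
  obtain ⟨hr', hry⟩ := Finset.mem_filter.mp hr
  have hrprime : r.Prime := Nat.prime_of_mem_primeFactors hr'
  have hpr : p = r := (Nat.prime_dvd_prime_iff_eq hp hrprime).mp (hp.dvd_of_dvd_pow hdvd')
  exact hpr ▸ hry

lemma Aux.smoothPart_mul_roughPart (y : ℝ) {q : ℕ} (hq : q ≠ 0) :
    smoothPart y q * roughPart y q = q :=
  Nat.mul_div_cancel' (Aux.smoothPart_dvd y hq)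

lemma Aux.roughPart_pos (y : ℝ) {q : ℕ} (hq : q ≠ 0) : 0 < roughPart y q := by
  rcases Nat.eq_zero_or_pos (roughPart y q) with h | h
  · exfalso
    have := Aux.smoothPart_mul_roughPart y hq
    rw [h, mul_zero] at this
    exact hq this.symm
  · exact h

/-- `(1-t)⁻¹ ≤ exp (10 t)` for `0 ≤ t ≤ 9/10`. -/
lemma Aux.inv_one_sub_le_exp {t : ℝ} (h0 : 0 ≤ t) (h1 : t ≤ 9 / 10) :
    (1 - t)⁻¹ ≤ Real.exp (10 * t) := by
  have hpos : 0 < 1 - t := by linarith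
  have h2 : (1 - t)⁻¹ ≤ 1 + 10 * t := by
    rw [inv_eq_one_div, div_le_iff₀ hpos]
    nlinarith
  refine h2.trans ?_
  have := Real.add_one_le_exp (10 * t)
  linarith

set_option maxHeartbeats 1000000 in
/-- The bound (3.10): for `(x,y) ∈ D(1)` with `α > 3/4 + ε/3` and `C ≥ x`,
`∑_{q ≤ C^{1/4}} (φ(q₀)/φ(q₁)) q₀^{-1-α+ε/3} ≪_ε C^{ε/3}`, where `q = q₀q₁` with
`P⁺(q₀) ≤ y` and `P⁻(q₁) > y`. -/
theorem sum_smooth_rough_parts (ε : ℝ) (hε : 0 < ε) :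
    ∃ K : ℝ, 0 < K ∧ ∀ x y C a : ℝ,
      2 ≤ Real.log x → Real.log x ≤ y → y ≤ x → x ≤ C →
      SaddleEq x y a → 3 / 4 + ε / 3 < a →
      (∑ q ∈ Finset.Icc 1 ⌊C ^ ((1 : ℝ) / 4)⌋₊,
          (Nat.totient (smoothPart y q) : ℝ) / (Nat.totient (roughPart y q) : ℝ) *
            (smoothPart y q : ℝ) ^ (-1 - a + ε / 3)) ≤ K * C ^ (ε / 3) := by
  set T : ℝ := Real.exp (120 / ε) with hT
  have hT0 : (0 : ℝ) < T := Real.exp_pos _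
  refine ⟨Real.exp (10 * (T + 1)) * (1 + 24 / ε) ^ 2, by positivity, ?_⟩
  intro x y C a hlx hxy hyx hxC hsad ha
  obtain ⟨ha0, hsadeq⟩ := hsad
  have hy2 : (2 : ℝ) ≤ y := le_trans hlx hxy
  have hx2 : (2 : ℝ) ≤ x := le_trans hy2 hyx
  have hx0 : (0 : ℝ) < x := by linarith
  have hC2 : (2 : ℝ) ≤ C := le_trans hx2 hxC
  have hC0 : (0 : ℝ) < C := by linarith
  have hC1 : (1 : ℝ) ≤ C := by linarith
  set N : ℕ := ⌊y⌋₊ + 1 with hN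
  set Q : ℕ := ⌊C ^ ((1 : ℝ) / 4)⌋₊ with hQ
  have hQC : (Q : ℝ) ≤ C ^ ((1 : ℝ) / 4) := Nat.floor_le (by positivity)
  have hC14 : C ^ ((1 : ℝ) / 4) ≤ C := by
    calc C ^ ((1 : ℝ) / 4) ≤ C ^ (1 : ℝ) :=
          Real.rpow_le_rpow_of_exponent_le hC1 (by norm_num)
      _ = C := Real.rpow_one C
  -- pointwise bound
  have key : ∀ q ∈ Finset.Icc 1 Q,
      (Nat.totient (smoothPart y q) : ℝ) / (Nat.totient (roughPart y q) : ℝ) *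
        (smoothPart y q : ℝ) ^ (-1 - a + ε / 3)
      ≤ C ^ (ε / 12) * ((smoothPart y q : ℝ) ^ (-a) *
          (((roughPart y q).divisors.card : ℝ) / (roughPart y q : ℝ))) := by
    intro q hq
    obtain ⟨hq1, hqQ⟩ := Finset.mem_Icc.mp hq
    have hq0 : q ≠ 0 := by omega
    have hq0pos : 0 < smoothPart y q := Aux.smoothPart_pos y q
    have hq1pos : 0 < roughPart y q := Aux.roughPart_pos y hq0
    have hq0R : (0 : ℝ) < (smoothPart y q : ℝ) := by exact_mod_cast hq0pos
    have hq1R : (0 : ℝ) < (roughPart y q : ℝ) := by exact_mod_cast hq1pos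
    have hq0le : smoothPart y q ≤ q :=
      Nat.le_of_dvd (Nat.pos_of_ne_zero hq0) (Aux.smoothPart_dvd y hq0)
    have hq0C : (smoothPart y q : ℝ) ≤ C ^ ((1 : ℝ) / 4) := by
      refine le_trans ?_ hQC
      exact_mod_cast hq0le.trans hqQ
    have h1 : (Nat.totient (smoothPart y q) : ℝ) ≤ (smoothPart y q : ℝ) := by
      exact_mod_cast Nat.totient_le _
    have hφq1 : (0 : ℝ) < (Nat.totient (roughPart y q) : ℝ) := by
      exact_mod_cast Nat.totient_pos.mpr hq1pos
    have h2 : (1 : ℝ) / (Nat.totient (roughPart y q) : ℝ)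
        ≤ ((roughPart y q).divisors.card : ℝ) / (roughPart y q : ℝ) := by
      rw [div_le_div_iff₀ hφq1 hq1R, one_mul]
      exact_mod_cast Aux.le_card_mul_totient _ hq1pos
    have h3 : (smoothPart y q : ℝ) ^ (ε / 3) ≤ C ^ (ε / 12) := by
      calc (smoothPart y q : ℝ) ^ (ε / 3) ≤ (C ^ ((1 : ℝ) / 4)) ^ (ε / 3) :=
            Real.rpow_le_rpow hq0R.le hq0C (by positivity)
        _ = C ^ (ε / 12) := by
            rw [← Real.rpow_mul hC0.le]
            congr 1
            ring
    have hexp : (smoothPart y q : ℝ) ^ (-1 - a + ε / 3)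
        = (smoothPart y q : ℝ) ^ (ε / 3) * (smoothPart y q : ℝ)⁻¹ *
            (smoothPart y q : ℝ) ^ (-a) := by
      rw [show -1 - a + ε / 3 = ε / 3 + (-1) + (-a) by ring, Real.rpow_add hq0R,
        Real.rpow_add hq0R, Real.rpow_neg_one]
    calc (Nat.totient (smoothPart y q) : ℝ) / (Nat.totient (roughPart y q) : ℝ) *
          (smoothPart y q : ℝ) ^ (-1 - a + ε / 3)
        = ((Nat.totient (smoothPart y q) : ℝ) * (smoothPart y q : ℝ)⁻¹) *
            ((smoothPart y q : ℝ) ^ (ε / 3)) *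
            ((smoothPart y q : ℝ) ^ (-a) * ((1 : ℝ) / (Nat.totient (roughPart y q) : ℝ))) := by
          rw [hexp, div_eq_mul_inv]
          ring
      _ ≤ 1 * (C ^ (ε / 12)) * ((smoothPart y q : ℝ) ^ (-a) *
            (((roughPart y q).divisors.card : ℝ) / (roughPart y q : ℝ))) := by
          have e1 : (Nat.totient (smoothPart y q) : ℝ) * (smoothPart y q : ℝ)⁻¹ ≤ 1 := by
            rw [← div_eq_mul_inv, div_le_one hq0R]
            exact h1
          refine mul_le_mul (mul_le_mul e1 h3 (by positivity) (by norm_num)) ?_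
            (by positivity) (by positivity)
          exact mul_le_mul_of_nonneg_left h2 (by positivity)
      _ = C ^ (ε / 12) * ((smoothPart y q : ℝ) ^ (-a) *
            (((roughPart y q).divisors.card : ℝ) / (roughPart y q : ℝ))) := by ring
  -- sum step
  have sumle : (∑ q ∈ Finset.Icc 1 Q,
      (Nat.totient (smoothPart y q) : ℝ) / (Nat.totient (roughPart y q) : ℝ) *
        (smoothPart y q : ℝ) ^ (-1 - a + ε / 3))
      ≤ C ^ (ε / 12) * ∑ q ∈ Finset.Icc 1 Q,
        ((smoothPart y q : ℝ) ^ (-a) *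
          (((roughPart y q).divisors.card : ℝ) / (roughPart y q : ℝ))) := by
    rw [Finset.mul_sum]
    exact Finset.sum_le_sum key
  -- factor the double sum
  have himage : ∑ q ∈ Finset.Icc 1 Q,
      ((smoothPart y q : ℝ) ^ (-a) *
        (((roughPart y q).divisors.card : ℝ) / (roughPart y q : ℝ)))
      ≤ (∑ m ∈ (Finset.Icc 1 Q).filter (fun m => SmoothNum y m), (m : ℝ) ^ (-a)) *
        (∑ n ∈ Finset.Icc 1 Q, ((n.divisors.card : ℝ) / n)) := by
    have hinj : ∀ u ∈ Finset.Icc 1 Q, ∀ v ∈ Finset.Icc 1 Q,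
        (fun q => (smoothPart y q, roughPart y q)) u =
          (fun q => (smoothPart y q, roughPart y q)) v → u = v := by
      intro u hu v hv huv
      obtain ⟨hu1, -⟩ := Finset.mem_Icc.mp hu
      obtain ⟨hv1, -⟩ := Finset.mem_Icc.mp hv
      have h1 := Aux.smoothPart_mul_roughPart y (show u ≠ 0 by omega)
      have h2 := Aux.smoothPart_mul_roughPart y (show v ≠ 0 by omega)
      simp only [Prod.mk.injEq] at huv
      rw [← h1, ← h2, huv.1, huv.2]
    calc ∑ q ∈ Finset.Icc 1 Q,
        ((smoothPart y q : ℝ) ^ (-a) *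
          (((roughPart y q).divisors.card : ℝ) / (roughPart y q : ℝ)))
        = ∑ u ∈ (Finset.Icc 1 Q).image (fun q => (smoothPart y q, roughPart y q)),
            ((u.1 : ℝ) ^ (-a) * ((u.2.divisors.card : ℝ) / u.2)) :=
          by rw [Finset.sum_image hinj]
      _ ≤ ∑ u ∈ ((Finset.Icc 1 Q).filter (fun m => SmoothNum y m)) ×ˢ Finset.Icc 1 Q,
            ((u.1 : ℝ) ^ (-a) * ((u.2.divisors.card : ℝ) / u.2)) := by
          refine Finset.sum_le_sum_of_subset_of_nonneg ?_ ?_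
          · intro u hu
            obtain ⟨q, hq, rfl⟩ := Finset.mem_image.mp hu
            obtain ⟨hq1, hqQ⟩ := Finset.mem_Icc.mp hq
            have hq0 : q ≠ 0 := by omega
            have hqpos : 0 < q := by omega
            have hd0 : smoothPart y q ∣ q := Aux.smoothPart_dvd y hq0
            have hd1 : roughPart y q ∣ q :=
              Dvd.intro_left _ (Aux.smoothPart_mul_roughPart y hq0)
            refine Finset.mem_product.mpr ⟨Finset.mem_filter.mpr
              ⟨Finset.mem_Icc.mpr ⟨Aux.smoothPart_pos y q, (Nat.le_of_dvd hqpos hd0).trans hqQ⟩,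
                Aux.smoothNum_smoothPart y q⟩,
              Finset.mem_Icc.mpr ⟨Aux.roughPart_pos y hq0, (Nat.le_of_dvd hqpos hd1).trans hqQ⟩⟩
          · intro u _ _
            have : (0 : ℝ) ≤ (u.1 : ℝ) ^ (-a) := Real.rpow_nonneg (Nat.cast_nonneg _) _
            positivity
      _ = (∑ m ∈ (Finset.Icc 1 Q).filter (fun m => SmoothNum y m), (m : ℝ) ^ (-a)) *
            (∑ n ∈ Finset.Icc 1 Q, ((n.divisors.card : ℝ) / n)) := by
          rw [Finset.sum_product, Finset.sum_mul_sum]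
  -- the smooth sum: Euler product bound
  set f : ℕ →* ℝ :=
    { toFun := fun n => (n : ℝ) ^ (-a)
      map_one' := by simp
      map_mul' := fun m n => by
        push_cast
        exact Real.mul_rpow (Nat.cast_nonneg m) (Nat.cast_nonneg n) } with hf
  have hflt : ∀ {p : ℕ}, p.Prime → ‖f p‖ < 1 := by
    intro p hp
    have h1p : (1 : ℝ) < (p : ℝ) := by exact_mod_cast hp.one_lt
    show ‖(p : ℝ) ^ (-a)‖ < 1
    rw [Real.norm_eq_abs, abs_of_nonneg (Real.rpow_nonneg (Nat.cast_nonneg _) _)]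
    exact Real.rpow_lt_one_of_one_lt_of_neg h1p (by linarith)
  have hHas := (EulerProduct.summable_and_hasSum_smoothNumbers_prod_primesBelow_geometric
    (f := f) hflt N).2
  have hA : ∑ m ∈ (Finset.Icc 1 Q).filter (fun m => SmoothNum y m), (m : ℝ) ^ (-a)
      ≤ ∏ p ∈ N.primesBelow, (1 - (p : ℝ) ^ (-a))⁻¹ := by
    have hmemS : ∀ m ∈ (Finset.Icc 1 Q).filter (fun m => SmoothNum y m),
        m ∈ N.smoothNumbers := by
      intro m hm
      obtain ⟨hm', hsm⟩ := Finset.mem_filter.mp hm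
      refine Nat.mem_smoothNumbers'.mpr ?_
      intro p hp hdvd
      have : (p : ℝ) ≤ y := hsm p hp hdvd
      have : p ≤ ⌊y⌋₊ := Nat.le_floor this
      omega
    calc ∑ m ∈ (Finset.Icc 1 Q).filter (fun m => SmoothNum y m), (m : ℝ) ^ (-a)
        = ∑ i ∈ ((Finset.Icc 1 Q).filter (fun m => SmoothNum y m)).subtype
            (· ∈ N.smoothNumbers), f (i : ℕ) := by
          rw [Finset.sum_subtype_eq_sum_filter, Finset.filter_true_of_mem hmemS]
          simp only [hf, MonoidHom.coe_mk, OneHom.coe_mk]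
      _ ≤ ∏ p ∈ N.primesBelow, (1 - (p : ℝ) ^ (-a))⁻¹ :=
          sum_le_hasSum _ (fun i _ => Real.rpow_nonneg (Nat.cast_nonneg _) _) hHas
  -- product ≤ exp of sum
  have h910 : ∀ p ∈ N.primesBelow, (p : ℝ) ^ (-a) ≤ 9 / 10 := by
    intro p hp
    have hpp : p.Prime := Nat.prime_of_mem_primesBelow hp
    have h2p : (2 : ℝ) ≤ (p : ℝ) := by exact_mod_cast hpp.two_le
    have step1 : (p : ℝ) ^ (-a) ≤ (2 : ℝ) ^ (-a) := by
      rw [Real.rpow_neg (by positivity), Real.rpow_neg (by norm_num)]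
      have h2a : (2 : ℝ) ^ a ≤ (p : ℝ) ^ a := Real.rpow_le_rpow (by norm_num) h2p ha0.le
      exact inv_anti₀ (Real.rpow_pos_of_pos (by norm_num) a) h2a
    have step2 : (2 : ℝ) ^ (-a) ≤ (2 : ℝ) ^ (-(1 / 2 : ℝ)) :=
      Real.rpow_le_rpow_of_exponent_le (by norm_num) (by linarith)
    have step3 : (2 : ℝ) ^ (-(1 / 2 : ℝ)) ≤ 9 / 10 := by
      rw [Real.rpow_neg (by norm_num), ← Real.sqrt_eq_rpow]
      have hs : (10 / 9 : ℝ) ≤ Real.sqrt 2 := by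
        nlinarith [Real.sq_sqrt (by norm_num : (0 : ℝ) ≤ 2), Real.sqrt_nonneg 2]
      have hspos : (0 : ℝ) < Real.sqrt 2 := Real.sqrt_pos.mpr (by norm_num)
      have h9 : (Real.sqrt 2)⁻¹ ≤ ((10 : ℝ) / 9)⁻¹ := inv_anti₀ (by norm_num) hs
      norm_num at h9
      linarith
    linarith
  have hprod : ∏ p ∈ N.primesBelow, (1 - (p : ℝ) ^ (-a))⁻¹
      ≤ Real.exp (10 * ∑ p ∈ N.primesBelow, (p : ℝ) ^ (-a)) := by
    rw [Finset.mul_sum, Real.exp_sum]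
    refine Finset.prod_le_prod ?_ ?_
    · intro p hp
      have h1 := h910 p hp
      have h0 : (0 : ℝ) ≤ (p : ℝ) ^ (-a) := Real.rpow_nonneg (Nat.cast_nonneg _) _
      have hpos : (0 : ℝ) < 1 - (p : ℝ) ^ (-a) := by linarith
      exact inv_nonneg.mpr hpos.le
    · intro p hp
      exact Aux.inv_one_sub_le_exp (Real.rpow_nonneg (Nat.cast_nonneg _) _) (h910 p hp)
  -- the prime sum bound via the saddle point equation
  have hPsum : ∑ p ∈ N.primesBelow, (p : ℝ) ^ (-a) ≤ (T + 1) + ε / 120 * Real.log x := by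
    rw [← Finset.sum_filter_add_sum_filter_not N.primesBelow (fun p => ((p : ℕ) : ℝ) ≤ T)]
    have hb1 : ∑ p ∈ N.primesBelow.filter (fun p => ((p : ℕ) : ℝ) ≤ T), (p : ℝ) ^ (-a)
        ≤ T + 1 := by
      have hsubT : N.primesBelow.filter (fun p => ((p : ℕ) : ℝ) ≤ T)
          ⊆ Finset.range (⌊T⌋₊ + 1) := by
        intro p hp
        obtain ⟨-, hpT⟩ := Finset.mem_filter.mp hp
        exact Finset.mem_range.mpr (Nat.lt_succ_of_le (Nat.le_floor hpT))
      calc ∑ p ∈ N.primesBelow.filter (fun p => ((p : ℕ) : ℝ) ≤ T), (p : ℝ) ^ (-a)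
          ≤ (N.primesBelow.filter (fun p => ((p : ℕ) : ℝ) ≤ T)).card • (1 : ℝ) := by
            refine Finset.sum_le_card_nsmul _ _ _ ?_
            intro p hp
            have hp1 : (1 : ℝ) ≤ (p : ℝ) := by
              have := (Nat.prime_of_mem_primesBelow (Finset.mem_filter.mp hp).1).one_lt
              exact_mod_cast this.le
            exact Real.rpow_le_one_of_one_le_of_nonpos hp1 (by linarith)
        _ = ((N.primesBelow.filter (fun p => ((p : ℕ) : ℝ) ≤ T)).card : ℝ) := by
            rw [nsmul_eq_mul, mul_one]
        _ ≤ ((⌊T⌋₊ + 1 : ℕ) : ℝ) := by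
            exact_mod_cast (Finset.card_le_card hsubT).trans_eq (Finset.card_range _)
        _ ≤ T + 1 := by
            push_cast
            linarith [Nat.floor_le hT0.le]
    have hb2 : ∑ p ∈ N.primesBelow.filter (fun p => ¬((p : ℕ) : ℝ) ≤ T), (p : ℝ) ^ (-a)
        ≤ ε / 120 * Real.log x := by
      have hterm : ∀ p ∈ N.primesBelow.filter (fun p => ¬((p : ℕ) : ℝ) ≤ T),
          (p : ℝ) ^ (-a) ≤ ε / 120 * (Real.log p / ((p : ℝ) ^ a - 1)) := by
        intro p hp
        obtain ⟨hp', hpT⟩ := Finset.mem_filter.mp hp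
        push_neg at hpT
        have hpp := Nat.prime_of_mem_primesBelow hp'
        have h1p : (1 : ℝ) < (p : ℝ) := by exact_mod_cast hpp.one_lt
        have hpa : (1 : ℝ) < (p : ℝ) ^ a := Real.one_lt_rpow h1p ha0
        have hlogp : 120 / ε ≤ Real.log p := by
          have h := Real.log_le_log hT0 hpT.le
          rwa [hT, Real.log_exp] at h
        have h1 : (p : ℝ) ^ (-a) = ((p : ℝ) ^ a)⁻¹ := Real.rpow_neg (by positivity) a
        rw [h1]
        have h2 : ((p : ℝ) ^ a)⁻¹ ≤ ((p : ℝ) ^ a - 1)⁻¹ :=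
          inv_anti₀ (by linarith) (by linarith)
        have h3 : (1 : ℝ) ≤ ε / 120 * Real.log p := by
          have h4 : ε / 120 * (120 / ε) ≤ ε / 120 * Real.log p :=
            mul_le_mul_of_nonneg_left hlogp (by positivity)
          rwa [show ε / 120 * (120 / ε) = 1 by field_simp] at h4
        calc ((p : ℝ) ^ a)⁻¹ ≤ ((p : ℝ) ^ a - 1)⁻¹ := h2
          _ = 1 * ((p : ℝ) ^ a - 1)⁻¹ := (one_mul _).symm
          _ ≤ (ε / 120 * Real.log p) * ((p : ℝ) ^ a - 1)⁻¹ := by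
              refine mul_le_mul_of_nonneg_right h3 ?_
              have : (0 : ℝ) < (p : ℝ) ^ a - 1 := by linarith
              positivity
          _ = ε / 120 * (Real.log p / ((p : ℝ) ^ a - 1)) := by ring
      have hnonneg : ∀ p ∈ N.primesBelow,
          0 ≤ ε / 120 * (Real.log p / ((p : ℝ) ^ a - 1)) := by
        intro p hp
        have hpp := Nat.prime_of_mem_primesBelow hp
        have h1p : (1 : ℝ) < (p : ℝ) := by exact_mod_cast hpp.one_lt
        have hpa : (1 : ℝ) < (p : ℝ) ^ a := Real.one_lt_rpow h1p ha0
        have hlog : 0 ≤ Real.log p := Real.log_nonneg h1p.le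
        have hden : (0 : ℝ) < (p : ℝ) ^ a - 1 := by linarith
        positivity
      calc ∑ p ∈ N.primesBelow.filter (fun p => ¬((p : ℕ) : ℝ) ≤ T), (p : ℝ) ^ (-a)
          ≤ ∑ p ∈ N.primesBelow.filter (fun p => ¬((p : ℕ) : ℝ) ≤ T),
              ε / 120 * (Real.log p / ((p : ℝ) ^ a - 1)) := Finset.sum_le_sum hterm
        _ ≤ ∑ p ∈ N.primesBelow, ε / 120 * (Real.log p / ((p : ℝ) ^ a - 1)) :=
            Finset.sum_le_sum_of_subset_of_nonneg (Finset.filter_subset _ _)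
              (fun p hp _ => hnonneg p hp)
        _ = ε / 120 * ∑ p ∈ N.primesBelow, Real.log p / ((p : ℝ) ^ a - 1) :=
            (Finset.mul_sum _ _ _).symm
        _ = ε / 120 * Real.log x := by
            congr 1
    linarith
  -- assemble the smooth-sum bound
  have hAfinal : ∑ m ∈ (Finset.Icc 1 Q).filter (fun m => SmoothNum y m), (m : ℝ) ^ (-a)
      ≤ Real.exp (10 * (T + 1)) * x ^ (ε / 12) := by
    refine (hA.trans hprod).trans ?_
    have h10 : 10 * ∑ p ∈ N.primesBelow, (p : ℝ) ^ (-a)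
        ≤ 10 * (T + 1) + ε / 12 * Real.log x := by linarith
    calc Real.exp (10 * ∑ p ∈ N.primesBelow, (p : ℝ) ^ (-a))
        ≤ Real.exp (10 * (T + 1) + ε / 12 * Real.log x) := Real.exp_le_exp.mpr h10
      _ = Real.exp (10 * (T + 1)) * Real.exp (ε / 12 * Real.log x) := Real.exp_add _ _
      _ = Real.exp (10 * (T + 1)) * x ^ (ε / 12) := by
          rw [Real.rpow_def_of_pos hx0, mul_comm (Real.log x)]
  -- the divisor sum bound
  have hBfinal : ∑ n ∈ Finset.Icc 1 Q, ((n.divisors.card : ℝ) / n)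
      ≤ (1 + 24 / ε) ^ 2 * C ^ (ε / 12) := by
    refine (Aux.sum_card_divisors_div_le Q).trans ?_
    have hQ1 : 1 ≤ Q := by
      refine Nat.le_floor ?_
      rw [Nat.cast_one]
      exact Real.one_le_rpow hC1 (by norm_num)
    have hharm : ∑ m ∈ Finset.Icc 1 Q, (1 : ℝ) / m = ((harmonic Q : ℚ) : ℝ) := by
      rw [harmonic_eq_sum_Icc]
      push_cast
      simp [one_div]
    have h0 : (0 : ℝ) ≤ ∑ m ∈ Finset.Icc 1 Q, (1 : ℝ) / m := by positivity
    have hle : ∑ m ∈ Finset.Icc 1 Q, (1 : ℝ) / m ≤ (1 + 24 / ε) * C ^ (ε / 24) := by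
      rw [hharm]
      refine (harmonic_le_one_add_log Q).trans ?_
      have hQpos : (0 : ℝ) < (Q : ℝ) := by exact_mod_cast hQ1
      have hlogQ : Real.log Q ≤ Real.log C := Real.log_le_log hQpos (hQC.trans hC14)
      have hs1 : (1 : ℝ) ≤ C ^ (ε / 24) := Real.one_le_rpow hC1 (by positivity)
      have hlogC : Real.log C ≤ 24 / ε * C ^ (ε / 24) := by
        have h1 : Real.log (C ^ (ε / 24)) ≤ C ^ (ε / 24) - 1 :=
          Real.log_le_sub_one_of_pos (by positivity)
        rw [Real.log_rpow hC0] at h1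
        have h2 : (0 : ℝ) < 24 / ε := by positivity
        have h3 := mul_le_mul_of_nonneg_left h1 h2.le
        have h4 : 24 / ε * (ε / 24 * Real.log C) = Real.log C := by
          field_simp
        rw [h4] at h3
        nlinarith
      linarith
    calc (∑ m ∈ Finset.Icc 1 Q, (1 : ℝ) / m) ^ 2
        ≤ ((1 + 24 / ε) * C ^ (ε / 24)) ^ 2 := pow_le_pow_left₀ h0 hle 2
      _ = (1 + 24 / ε) ^ 2 * C ^ (ε / 12) := by
          rw [mul_pow, ← Real.rpow_natCast (C ^ (ε / 24)) 2, ← Real.rpow_mul hC0.le]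
          congr 1
          push_cast
          ring
  -- final assembly
  have hxC12 : x ^ (ε / 12) ≤ C ^ (ε / 12) := Real.rpow_le_rpow hx0.le hxC (by positivity)
  have hApos : (0 : ℝ) ≤ ∑ m ∈ (Finset.Icc 1 Q).filter (fun m => SmoothNum y m), (m : ℝ) ^ (-a) := by
    refine Finset.sum_nonneg ?_
    intro m _
    exact Real.rpow_nonneg (Nat.cast_nonneg _) _
  have hBpos : (0 : ℝ) ≤ ∑ n ∈ Finset.Icc 1 Q, ((n.divisors.card : ℝ) / n) := by
    refine Finset.sum_nonneg ?_
    intro n _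
    positivity
  calc (∑ q ∈ Finset.Icc 1 Q,
      (Nat.totient (smoothPart y q) : ℝ) / (Nat.totient (roughPart y q) : ℝ) *
        (smoothPart y q : ℝ) ^ (-1 - a + ε / 3))
      ≤ C ^ (ε / 12) * ∑ q ∈ Finset.Icc 1 Q,
        ((smoothPart y q : ℝ) ^ (-a) *
          (((roughPart y q).divisors.card : ℝ) / (roughPart y q : ℝ))) := sumle
    _ ≤ C ^ (ε / 12) *
        ((∑ m ∈ (Finset.Icc 1 Q).filter (fun m => SmoothNum y m), (m : ℝ) ^ (-a)) *
          (∑ n ∈ Finset.Icc 1 Q, ((n.divisors.card : ℝ) / n))) :=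
        mul_le_mul_of_nonneg_left himage (by positivity)
    _ ≤ C ^ (ε / 12) *
        ((Real.exp (10 * (T + 1)) * x ^ (ε / 12)) * ((1 + 24 / ε) ^ 2 * C ^ (ε / 12))) := by
        refine mul_le_mul_of_nonneg_left ?_ (by positivity)
        exact mul_le_mul hAfinal hBfinal hBpos (by positivity)
    _ ≤ C ^ (ε / 12) *
        ((Real.exp (10 * (T + 1)) * C ^ (ε / 12)) * ((1 + 24 / ε) ^ 2 * C ^ (ε / 12))) := by
        have h1 : Real.exp (10 * (T + 1)) * x ^ (ε / 12)
            ≤ Real.exp (10 * (T + 1)) * C ^ (ε / 12) :=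
          mul_le_mul_of_nonneg_left hxC12 (Real.exp_pos _).le
        refine mul_le_mul_of_nonneg_left ?_ (by positivity)
        exact mul_le_mul_of_nonneg_right h1 (by positivity)
    _ = (Real.exp (10 * (T + 1)) * (1 + 24 / ε) ^ 2) *
          (C ^ (ε / 12) * C ^ (ε / 12) * C ^ (ε / 12)) := by ring
    _ = (Real.exp (10 * (T + 1)) * (1 + 24 / ε) ^ 2) * C ^ (ε / 4) := by
        rw [← Real.rpow_add hC0, ← Real.rpow_add hC0]
        congr 1
        ring
    _ ≤ (Real.exp (10 * (T + 1)) * (1 + 24 / ε) ^ 2) * C ^ (ε / 3) := by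
        refine mul_le_mul_of_nonneg_left
          (Real.rpow_le_rpow_of_exponent_le hC1 (by linarith)) (by positivity)

end

end Friable
end

section
/- Let y ≥ 2, let q₀ be a positive integer with P⁺(q₀) ≤ y, and let s ∈ ℂ with Re s > 0. Then ζ(s;y,q₀) := ∑_{n : P⁺(n) ≤ y} (μ(q₀/gcd(q₀,n))/φ(q₀/gcd(q₀,n)))·n^{−s} = q₀^{−s}·∏_{p | q₀}(1 − (p^s − 1)/(p − 1))·ζ(s,y). Moreover, for any positive integer q written as q = q₀q₁ with P⁺(q₀) ≤ y and P⁻(q₁) > y, and any compactly supported Φ and β ∈ ℝ, one has M_Φ(x,y;q,β) = (μ(q₁)/φ(q₁))·M_Φ(x,y;q₀,β). -/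
namespace Friable

open scoped Classical BigOperators

noncomputable section

/-! ### Auxiliary lemmas -/

lemma not_smoothNum_zero (y : ℝ) : ¬ SmoothNum y 0 := by
  obtain ⟨p, hple, hp⟩ := Nat.exists_infinite_primes (⌊y⌋₊ + 1)
  intro h
  have h1 := h p hp (dvd_zero p)
  have h2 : y < ((⌊y⌋₊ : ℝ) + 1) := Nat.lt_floor_add_one y
  have h3 : ((⌊y⌋₊ : ℝ) + 1) ≤ (p : ℝ) := by exact_mod_cast hple
  linarith

lemma smoothNum_mul_iff {y : ℝ} {m n : ℕ} :
    SmoothNum y (m * n) ↔ SmoothNum y m ∧ SmoothNum y n := by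
  constructor
  · exact fun h => ⟨fun p hp hd => h p hp (hd.mul_right n),
      fun p hp hd => h p hp (hd.mul_left m)⟩
  · rintro ⟨h1, h2⟩ p hp hd
    rcases (Nat.Prime.dvd_mul hp).mp hd with h | h
    · exact h1 p hp h
    · exact h2 p hp h

lemma SmoothNum.of_dvd {y : ℝ} {m n : ℕ} (h : SmoothNum y n) (hd : m ∣ n) :
    SmoothNum y m := fun p hp hpd => h p hp (hpd.trans hd)

lemma smoothNum_iff_mem {y : ℝ} (hy : 0 ≤ y) {n : ℕ} :
    SmoothNum y n ↔ n ∈ Nat.factoredNumbers (Finset.range (⌊y⌋₊ + 1)) := by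
  rw [Nat.mem_factoredNumbers']
  refine ⟨fun h p hp hd => ?_, fun h p hp hd => ?_⟩
  · rw [Finset.mem_range, Nat.lt_add_one_iff, Nat.le_floor_iff hy]
    exact h p hp hd
  · have := h p hp hd
    rw [Finset.mem_range, Nat.lt_add_one_iff, Nat.le_floor_iff hy] at this
    exact this

lemma coprime_of_rough {y : ℝ} {q₁ n : ℕ}
    (hrough : ∀ p : ℕ, p.Prime → p ∣ q₁ → y < (p : ℝ)) (hn : SmoothNum y n) :
    Nat.Coprime q₁ n := by
  by_contra hco
  obtain ⟨p, hp, hpd⟩ := Nat.exists_prime_and_dvd hco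
  have h1 := hrough p hp (hpd.trans (Nat.gcd_dvd_left _ _))
  have h2 := hn p hp (hpd.trans (Nat.gcd_dvd_right _ _))
  linarith

/-- cpow of a product of natural numbers splits. -/
lemma natCast_mul_cpow (m n : ℕ) (s : ℂ) :
    ((m * n : ℕ) : ℂ) ^ s = (m : ℂ) ^ s * (n : ℂ) ^ s := by
  rcases eq_or_ne m 0 with rfl | hm
  · rcases eq_or_ne s 0 with rfl | hs
    · simp [Complex.cpow_zero]
    · simp [Complex.zero_cpow hs]
  rcases eq_or_ne n 0 with rfl | hn
  · rcases eq_or_ne s 0 with rfl | hs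
    · simp [Complex.cpow_zero]
    · simp [Complex.zero_cpow hs]
  have := Complex.mul_cpow_ofReal_nonneg (Nat.cast_nonneg m : (0:ℝ) ≤ m)
    (Nat.cast_nonneg n : (0:ℝ) ≤ n) s
  push_cast at this ⊢
  exact this

lemma natCast_pow_cpow (p j : ℕ) (s : ℂ) :
    ((p ^ j : ℕ) : ℂ) ^ s = ((p : ℂ) ^ s) ^ j := by
  induction j with
  | zero => simp
  | succ k ih =>
    rw [pow_succ, natCast_mul_cpow, ih, pow_succ]

lemma summable_norm_smooth (y : ℝ) (hy : 0 ≤ y) {s : ℂ} (hs : 0 < s.re) :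
    Summable (fun n : ℕ => if SmoothNum y n then ‖(n : ℂ) ^ (-s)‖ else 0) := by
  set f : ℕ → ℝ := fun n => if n = 0 then 0 else (n : ℝ) ^ (-s.re) with hf
  have hf₁ : f 1 = 1 := by simp [hf]
  have hmul : ∀ {m n : ℕ}, Nat.Coprime m n → f (m * n) = f m * f n := by
    intro m n _
    rcases eq_or_ne m 0 with rfl | hm
    · simp [hf]
    rcases eq_or_ne n 0 with rfl | hn
    · simp [hf]
    simp only [hf, if_neg hm, if_neg hn, if_neg (mul_ne_zero hm hn)]
    push_cast
    exact Real.mul_rpow (Nat.cast_nonneg m) (Nat.cast_nonneg n)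
  have hsum : ∀ {p : ℕ}, p.Prime → Summable (fun n : ℕ => ‖f (p ^ n)‖) := by
    intro p hp
    have hplt : (p : ℝ) ^ (-s.re) < 1 := by
      apply Real.rpow_lt_one_of_one_lt_of_neg
      · exact_mod_cast hp.one_lt
      · linarith
    have hnn : (0:ℝ) ≤ (p : ℝ) ^ (-s.re) := Real.rpow_nonneg (Nat.cast_nonneg p) _
    apply Summable.congr (summable_geometric_of_lt_one hnn hplt)
    intro n
    simp only [hf, if_neg (pow_ne_zero n hp.pos.ne')]
    push_cast
    rw [← Real.rpow_natCast (p:ℝ) n, ← Real.rpow_mul (Nat.cast_nonneg p), mul_comm,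
      Real.rpow_mul (Nat.cast_nonneg p), Real.rpow_natCast]
    rw [Real.norm_eq_abs, abs_of_nonneg (pow_nonneg hnn n)]
  have key := (EulerProduct.summable_and_hasSum_factoredNumbers_prod_filter_prime_tsum
    hf₁ hmul hsum (Finset.range (⌊y⌋₊ + 1))).1
  have key2 : Summable (Set.indicator (Nat.factoredNumbers (Finset.range (⌊y⌋₊ + 1)))
      (fun n => ‖f n‖)) := summable_subtype_iff_indicator.mp key
  apply key2.congr
  intro n
  by_cases hn : SmoothNum y n
  · have hmem : n ∈ Nat.factoredNumbers (Finset.range (⌊y⌋₊ + 1)) :=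
      (smoothNum_iff_mem hy).mp hn
    have hn0 : n ≠ 0 := fun h => not_smoothNum_zero y (h ▸ hn)
    rw [Set.indicator_of_mem hmem, if_pos hn]
    simp only [hf, if_neg hn0]
    rw [Real.norm_eq_abs, abs_of_nonneg (Real.rpow_nonneg (Nat.cast_nonneg n) _)]
    rw [Complex.norm_natCast_cpow_of_pos (Nat.pos_of_ne_zero hn0), Complex.neg_re]
  · rw [Set.indicator_of_notMem (fun hmem => hn ((smoothNum_iff_mem hy).mpr hmem)), if_neg hn]

lemma summable_smooth_dvd (y : ℝ) (hy : 0 ≤ y) {s : ℂ} (hs : 0 < s.re) (d : ℕ) :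
    Summable (fun n : ℕ => if SmoothNum y n ∧ d ∣ n then (n : ℂ) ^ (-s) else 0) := by
  apply Summable.of_norm_bounded (summable_norm_smooth y hy hs)
  intro n
  by_cases h : SmoothNum y n ∧ d ∣ n
  · rw [if_pos h, if_pos h.1]
  · rw [if_neg h, norm_zero]
    by_cases h1 : SmoothNum y n
    · rw [if_pos h1]; exact norm_nonneg _
    · rw [if_neg h1]

lemma tsum_smooth_dvd (y : ℝ) (hy : 0 ≤ y) {s : ℂ} {d : ℕ}
    (hd : d ≠ 0) (hds : SmoothNum y d) :
    ∑' n : ℕ, (if SmoothNum y n ∧ d ∣ n then (n : ℂ) ^ (-s) else 0)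
      = (d : ℂ) ^ (-s) * ∑' n : ℕ, (if SmoothNum y n then (n : ℂ) ^ (-s) else 0) := by
  rw [← tsum_mul_left]
  set f : ℕ → ℂ := fun n => if SmoothNum y n ∧ d ∣ n then (n : ℂ) ^ (-s) else 0 with hfdef
  have hinj : Function.Injective (fun m : ℕ => d * m) :=
    fun a b h => by
      have := (Nat.mul_right_inj hd).mp h
      exact this
  have hsupp : Function.support f ⊆ Set.range (fun m : ℕ => d * m) := by
    intro n hn
    simp only [hfdef, Function.mem_support, ne_eq, ite_eq_right_iff, not_forall] at hn
    obtain ⟨⟨_, hdn⟩, _⟩ := hn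
    obtain ⟨c, rfl⟩ := hdn
    exact ⟨c, rfl⟩
  rw [← Function.Injective.tsum_eq hinj hsupp]
  congr 1
  funext m
  by_cases hm : SmoothNum y m
  · have hsm : SmoothNum y (d * m) := smoothNum_mul_iff.mpr ⟨hds, hm⟩
    have hdvd : d ∣ d * m := Dvd.intro m rfl
    rw [hfdef]
    simp only []
    rw [if_pos ⟨hsm, hdvd⟩, if_pos hm]
    exact natCast_mul_cpow d m (-s)
  · have hsm : ¬ SmoothNum y (d * m) := fun h => hm (smoothNum_mul_iff.mp h).2
    simp only [hfdef, hsm, false_and, if_false, if_neg hm, mul_zero]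

open ArithmeticFunction in
/-- The arithmetic function `d ↦ d` if `d ∣ n`, else `0`. -/
def En (n : ℕ) : ArithmeticFunction ℂ :=
  ⟨fun d => if d ∣ n ∧ d ≠ 0 then (d : ℂ) else 0, by simp⟩

lemma En_apply (n d : ℕ) : En n d = if d ∣ n ∧ d ≠ 0 then (d : ℂ) else 0 := rfl

lemma En_mult (n : ℕ) : (En n).IsMultiplicative := by
  constructor
  · simp [En_apply]
  · intro a b hab
    simp only [En_apply]
    by_cases ha : a ∣ n ∧ a ≠ 0
    · by_cases hb : b ∣ n ∧ b ≠ 0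
      · have hd : a * b ∣ n := Nat.Coprime.mul_dvd_of_dvd_of_dvd hab ha.1 hb.1
        rw [if_pos ⟨hd, mul_ne_zero ha.2 hb.2⟩, if_pos ha, if_pos hb, Nat.cast_mul]
      · rw [if_neg hb, mul_zero, if_neg]
        intro ⟨h1, h2⟩
        exact hb ⟨(Dvd.intro_left a rfl).trans h1, fun h => h2 (by simp [h])⟩
    · rw [if_neg ha, zero_mul, if_neg]
      intro ⟨h1, h2⟩
      exact ha ⟨(Dvd.intro b rfl).trans h1, fun h => h2 (by simp [h])⟩

open ArithmeticFunction in
/-- `μ(q/(q,n)) φ(q) / φ(q/(q,n))` as an arithmetic function of `q`. -/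
def F1aux (n : ℕ) : ArithmeticFunction ℂ :=
  ⟨fun q => ((moebius (q / Nat.gcd q n) : ℤ) : ℂ) * (Nat.totient q : ℂ) /
      ((Nat.totient (q / Nat.gcd q n) : ℕ) : ℂ), by simp⟩

open ArithmeticFunction in
lemma F1aux_apply (n q : ℕ) : F1aux n q = ((moebius (q / Nat.gcd q n) : ℤ) : ℂ) *
    (Nat.totient q : ℂ) / ((Nat.totient (q / Nat.gcd q n) : ℕ) : ℂ) := rfl

open ArithmeticFunction in
lemma F1aux_mult (n : ℕ) : (F1aux n).IsMultiplicative := by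
  constructor
  · simp [F1aux_apply]
  · intro a b hab
    simp only [F1aux_apply]
    have hga : Nat.gcd a n ∣ a := Nat.gcd_dvd_left _ _
    have hgb : Nat.gcd b n ∣ b := Nat.gcd_dvd_left _ _
    have hgcd : Nat.gcd (a * b) n = Nat.gcd a n * Nat.gcd b n := by
      rw [Nat.gcd_comm (a*b) n, Nat.Coprime.gcd_mul n hab, Nat.gcd_comm n a, Nat.gcd_comm n b]
    have hdiv : a * b / (Nat.gcd a n * Nat.gcd b n) = (a / Nat.gcd a n) * (b / Nat.gcd b n) :=
      (Nat.div_mul_div_comm hga hgb).symm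
    have hco : Nat.Coprime (a / Nat.gcd a n) (b / Nat.gcd b n) :=
      Nat.Coprime.coprime_dvd_left (Nat.div_dvd_of_dvd hga)
        (Nat.Coprime.coprime_dvd_right (Nat.div_dvd_of_dvd hgb) hab)
    rw [hgcd, hdiv, isMultiplicative_moebius.map_mul_of_coprime hco,
      Nat.totient_mul hab, Nat.totient_mul hco]
    push_cast
    rw [div_eq_mul_inv, div_eq_mul_inv, div_eq_mul_inv, mul_inv]
    ring

open ArithmeticFunction in
/-- Ramanujan-sum identity: `μ(q/(q,n)) φ(q) / φ(q/(q,n)) = ∑_{d ∣ (q,n)} d μ(q/d)`. -/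
lemma ramanujan_id (n : ℕ) : F1aux n = En n * (moebius : ArithmeticFunction ℤ) := by
  have hEmult : (En n * (moebius : ArithmeticFunction ℤ)).IsMultiplicative :=
    (En_mult n).mul (isMultiplicative_moebius.intCast)
  rw [ArithmeticFunction.IsMultiplicative.eq_iff_eq_on_prime_powers _ (F1aux_mult n) _ hEmult]
  intro p i hp
  rcases Nat.eq_zero_or_pos i with rfl | hi
  · rw [pow_zero, (F1aux_mult n).map_one, hEmult.map_one]
  obtain ⟨k, rfl⟩ : ∃ k, i = k + 1 := ⟨i - 1, (Nat.succ_pred_eq_of_pos hi).symm⟩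
  have hRHS : (En n * (moebius : ArithmeticFunction ℤ)) (p ^ (k+1)) =
      ∑ j ∈ Finset.range (k + 2),
        (if p ^ j ∣ n then ((p:ℂ) ^ j) else 0) * ((moebius (p ^ (k + 1 - j)) : ℤ) : ℂ) := by
    rw [mul_apply, Nat.sum_divisorsAntidiagonal
      (f := fun a b => En n a * ((moebius : ArithmeticFunction ℤ) : ArithmeticFunction ℂ) b),
      Nat.sum_divisors_prime_pow hp]
    simp only [intCoe_apply]
    refine Finset.sum_congr rfl fun j hj => ?_
    rw [Finset.mem_range] at hj
    rw [En_apply, Nat.pow_div (by omega) hp.pos]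
    congr 2
    · rw [eq_iff_iff]
      constructor
      · rintro ⟨h, -⟩; exact h
      · intro h; exact ⟨h, pow_ne_zero _ hp.pos.ne'⟩
    · push_cast; ring
  rw [hRHS]
  have hsplit : ∑ j ∈ Finset.range (k + 2),
      (if p ^ j ∣ n then ((p:ℂ) ^ j) else 0) * ((moebius (p ^ (k + 1 - j)) : ℤ) : ℂ)
      = (if p ^ k ∣ n then ((p:ℂ) ^ k) else 0) * (-1)
        + (if p ^ (k+1) ∣ n then ((p:ℂ) ^ (k+1)) else 0) := by
    rw [Finset.sum_range_succ, Finset.sum_range_succ]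
    have hz : ∑ j ∈ Finset.range k,
        (if p ^ j ∣ n then ((p:ℂ) ^ j) else 0) * ((moebius (p ^ (k + 1 - j)) : ℤ) : ℂ) = 0 := by
      apply Finset.sum_eq_zero
      intro j hj
      rw [Finset.mem_range] at hj
      rw [ArithmeticFunction.moebius_apply_prime_pow hp (show k + 1 - j ≠ 0 by omega),
        if_neg (show ¬ (k + 1 - j = 1) by omega)]
      simp
    rw [hz, zero_add]
    have h1 : k + 1 - k = 1 := by omega
    have h2 : k + 1 - (k + 1) = 0 := by omega
    rw [h1, h2, pow_one, ArithmeticFunction.moebius_apply_prime hp, pow_zero,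
      ArithmeticFunction.moebius_apply_one]
    push_cast
    ring
  rw [hsplit]
  have hφ : ((Nat.totient (p ^ (k+1)) : ℕ) : ℂ) = (p:ℂ) ^ k * ((p:ℂ) - 1) := by
    rw [Nat.totient_prime_pow hp (Nat.succ_pos k)]
    push_cast [Nat.cast_sub hp.one_le]
    ring
  by_cases hA : p ^ (k+1) ∣ n
  · have hgcd : Nat.gcd (p ^ (k+1)) n = p ^ (k+1) := Nat.gcd_eq_left hA
    have hkA : p ^ k ∣ n := (pow_dvd_pow p (Nat.le_succ k)).trans hA
    rw [F1aux_apply, hgcd, Nat.div_self (pow_pos hp.pos _),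
      ArithmeticFunction.moebius_apply_one, Nat.totient_one, if_pos hA, if_pos hkA]
    push_cast
    rw [hφ]
    ring
  · by_cases hB : p ^ k ∣ n
    · have h1 : p ^ k ∣ Nat.gcd (p ^ (k+1)) n :=
        Nat.dvd_gcd (pow_dvd_pow p (Nat.le_succ k)) hB
      obtain ⟨j, hj, hg⟩ := (Nat.dvd_prime_pow hp).mp (Nat.gcd_dvd_left (p ^ (k+1)) n)
      have hjk : j ≤ k := by
        rcases Nat.lt_or_ge j (k+1) with h | h
        · omega
        · exfalso
          have : j = k + 1 := by omega
          apply hA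
          rw [← this, ← hg]
          exact Nat.gcd_dvd_right _ _
      have hgcd : Nat.gcd (p ^ (k+1)) n = p ^ k := by
        apply Nat.dvd_antisymm _ h1
        rw [hg]
        exact pow_dvd_pow p hjk
      have hdiv : p ^ (k+1) / p ^ k = p := by
        rw [Nat.pow_div (Nat.le_succ k) hp.pos]
        simp
      rw [F1aux_apply, hgcd, hdiv, ArithmeticFunction.moebius_apply_prime hp,
        Nat.totient_prime hp, if_pos hB, if_neg hA, hφ]
      have hpm1 : ((p - 1 : ℕ) : ℂ) ≠ 0 := by
        have : p - 1 ≠ 0 := Nat.sub_ne_zero_of_lt hp.one_lt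
        exact_mod_cast Nat.cast_ne_zero.mpr this
      push_cast [Nat.cast_sub hp.one_le] at hpm1 ⊢
      field_simp
      ring
    · have hkB : ¬ p ^ (k+1) ∣ n := fun h => hB ((pow_dvd_pow p (Nat.le_succ k)).trans h)
      obtain ⟨j, hj, hg⟩ := (Nat.dvd_prime_pow hp).mp (Nat.gcd_dvd_left (p ^ (k+1)) n)
      have hjk : j < k := by
        by_contra hc
        push_neg at hc
        apply hB
        calc p ^ k ∣ p ^ j := pow_dvd_pow p hc
        _ ∣ n := hg ▸ Nat.gcd_dvd_right _ _
      have hdiv : p ^ (k+1) / Nat.gcd (p ^ (k+1)) n = p ^ (k + 1 - j) := by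
        rw [hg, Nat.pow_div (by omega) hp.pos]
      rw [F1aux_apply, hdiv, ArithmeticFunction.moebius_apply_prime_pow hp
          (show k + 1 - j ≠ 0 by omega),
        if_neg (show ¬ (k + 1 - j = 1) by omega), if_neg hB, if_neg hkB]
      simp

/-- `q ↦ q · q^{-s}`. -/
def G1 (s : ℂ) : ArithmeticFunction ℂ :=
  ⟨fun q => (q : ℂ) * (q : ℂ) ^ (-s), by simp⟩

lemma G1_apply (s : ℂ) (q : ℕ) : G1 s q = (q : ℂ) * (q : ℂ) ^ (-s) := rfl

lemma G1_mult (s : ℂ) : (G1 s).IsMultiplicative := by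
  constructor
  · simp [G1_apply]
  · intro a b _
    simp only [G1_apply, Nat.cast_mul]
    rw [show ((a : ℂ) * b) = ((a * b : ℕ) : ℂ) by push_cast; ring, natCast_mul_cpow]
    push_cast
    ring

/-- `q ↦ φ(q) q^{-s} ∏_{p ∣ q} (1 - (p^s-1)/(p-1))`. -/
def G2 (s : ℂ) : ArithmeticFunction ℂ :=
  ⟨fun q => (Nat.totient q : ℂ) * (q : ℂ) ^ (-s) *
      ∏ p ∈ q.primeFactors, (1 - ((p : ℂ) ^ s - 1) / ((p : ℂ) - 1)), by simp⟩

lemma G2_apply (s : ℂ) (q : ℕ) : G2 s q = (Nat.totient q : ℂ) * (q : ℂ) ^ (-s) *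
    ∏ p ∈ q.primeFactors, (1 - ((p : ℂ) ^ s - 1) / ((p : ℂ) - 1)) := rfl

lemma G2_mult (s : ℂ) : (G2 s).IsMultiplicative := by
  constructor
  · simp [G2_apply]
  · intro a b hab
    rcases eq_or_ne a 0 with rfl | ha
    · simp [G2_apply]
    rcases eq_or_ne b 0 with rfl | hb
    · simp [G2_apply]
    simp only [G2_apply]
    rw [Nat.primeFactors_mul ha hb,
      Finset.prod_union (Nat.Coprime.disjoint_primeFactors hab),
      Nat.totient_mul hab, Nat.cast_mul,
      show (((a * b : ℕ)) : ℂ) ^ (-s) = (a : ℂ) ^ (-s) * (b : ℂ) ^ (-s) from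
        natCast_mul_cpow a b (-s)]
    ring

open ArithmeticFunction in
lemma G_eq (s : ℂ) :
    G1 s * (moebius : ArithmeticFunction ℤ) = G2 s := by
  have hmul : (G1 s * (moebius : ArithmeticFunction ℤ)).IsMultiplicative :=
    (G1_mult s).mul (isMultiplicative_moebius.intCast)
  rw [ArithmeticFunction.IsMultiplicative.eq_iff_eq_on_prime_powers _ hmul _ (G2_mult s)]
  intro p i hp
  rcases Nat.eq_zero_or_pos i with rfl | hi
  · rw [pow_zero, hmul.map_one, (G2_mult s).map_one]
  obtain ⟨k, rfl⟩ : ∃ k, i = k + 1 := ⟨i - 1, (Nat.succ_pred_eq_of_pos hi).symm⟩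
  have key : ∀ (t A B : ℂ), t - 1 ≠ 0 → A * B = 1 →
      t ^ (k+1) * A ^ (k+1) - t ^ k * A ^ k
        = t ^ k * (t - 1) * A ^ (k+1) * (1 - (B - 1) / (t - 1)) := by
    intro t A B h1 h2
    have hu : (t - 1) * (t - 1)⁻¹ = 1 := mul_inv_cancel₀ h1
    rw [div_eq_mul_inv]
    linear_combination (t ^ k * A ^ k) * h2 + (t ^ k * A ^ (k+1) * (B - 1)) * hu
  have htne : (p : ℂ) ≠ 0 := Nat.cast_ne_zero.mpr hp.pos.ne'
  have htne1 : (p : ℂ) - 1 ≠ 0 := by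
    intro h
    have h1 : (p : ℂ) = 1 := by linear_combination h
    exact hp.one_lt.ne' (Nat.cast_eq_one.mp h1)
  have hAB : (p : ℂ) ^ (-s) * (p : ℂ) ^ s = 1 := by
    rw [← Complex.cpow_add _ _ htne]
    simp
  have hLHS : (G1 s * (moebius : ArithmeticFunction ℤ)) (p ^ (k+1)) =
      (p:ℂ) ^ (k+1) * ((p:ℂ) ^ (-s)) ^ (k+1) - (p:ℂ) ^ k * ((p:ℂ) ^ (-s)) ^ k := by
    rw [mul_apply, Nat.sum_divisorsAntidiagonal
      (f := fun a b => G1 s a * ((moebius : ArithmeticFunction ℤ) : ArithmeticFunction ℂ) b),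
      Nat.sum_divisors_prime_pow hp, Finset.sum_range_succ, Finset.sum_range_succ]
    simp only [intCoe_apply]
    have hz : ∑ j ∈ Finset.range k,
        G1 s (p ^ j) * ((moebius (p ^ (k+1) / p ^ j) : ℤ) : ℂ) = 0 := by
      apply Finset.sum_eq_zero
      intro j hj
      rw [Finset.mem_range] at hj
      rw [Nat.pow_div (by omega) hp.pos,
        ArithmeticFunction.moebius_apply_prime_pow hp (show k + 1 - j ≠ 0 by omega),
        if_neg (show ¬ (k + 1 - j = 1) by omega)]
      simp
    rw [hz, zero_add]
    rw [Nat.pow_div (Nat.le_succ k) hp.pos, Nat.div_self (pow_pos hp.pos _),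
      show k + 1 - k = 1 by omega, pow_one, ArithmeticFunction.moebius_apply_prime hp]
    have e1 : ArithmeticFunction.moebius 1 = 1 := ArithmeticFunction.moebius_apply_one
    rw [e1, G1_apply, G1_apply, natCast_pow_cpow, natCast_pow_cpow]
    push_cast
    ring
  rw [hLHS, G2_apply]
  have hφ : ((Nat.totient (p ^ (k+1))) : ℂ) = (p:ℂ) ^ k * ((p:ℂ) - 1) := by
    rw [Nat.totient_prime_pow hp (Nat.succ_pos k)]
    push_cast [Nat.cast_sub hp.one_le]
    ring
  rw [hφ, Nat.primeFactors_prime_pow (Nat.succ_ne_zero k) hp, Finset.prod_singleton,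
    natCast_pow_cpow]
  exact key ((p:ℂ)) ((p:ℂ) ^ (-s)) ((p:ℂ) ^ s) htne1 hAB

open ArithmeticFunction in
theorem zetaYQ_part1 (y : ℝ) (q₀ : ℕ) (s : ℂ) (hy : 2 ≤ y) (hq₀ : 1 ≤ q₀)
    (hsm : SmoothNum y q₀) (hs : 0 < s.re) :
    (∑' n : ℕ,
        if SmoothNum y n then
          ((ArithmeticFunction.moebius (q₀ / Nat.gcd q₀ n) : ℤ) : ℂ) /
            (Nat.totient (q₀ / Nat.gcd q₀ n) : ℂ) * (n : ℂ) ^ (-s)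
        else 0) =
      (q₀ : ℂ) ^ (-s) *
        (∏ p ∈ q₀.primeFactors, (1 - ((p : ℂ) ^ s - 1) / ((p : ℂ) - 1))) *
        zetaC s y := by
  have hy0 : (0:ℝ) ≤ y := by linarith
  have hφ0 : (Nat.totient q₀ : ℂ) ≠ 0 :=
    Nat.cast_ne_zero.mpr (Nat.totient_pos.mpr (by omega)).ne'
  have step1 : ∀ n : ℕ,
      (if SmoothNum y n then
          ((moebius (q₀ / Nat.gcd q₀ n) : ℤ) : ℂ) /
            (Nat.totient (q₀ / Nat.gcd q₀ n) : ℂ) * (n : ℂ) ^ (-s)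
        else 0)
      = ∑ d ∈ q₀.divisors, ((d : ℂ) * ((moebius (q₀ / d) : ℤ) : ℂ) / (Nat.totient q₀ : ℂ)) *
          (if SmoothNum y n ∧ d ∣ n then (n : ℂ) ^ (-s) else 0) := by
    intro n
    by_cases hn : SmoothNum y n
    · rw [if_pos hn]
      have hcoef : ((moebius (q₀ / Nat.gcd q₀ n) : ℤ) : ℂ) /
          (Nat.totient (q₀ / Nat.gcd q₀ n) : ℂ) = F1aux n q₀ / (Nat.totient q₀ : ℂ) := by
        rw [F1aux_apply, div_right_comm, mul_div_cancel_right₀ _ hφ0]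
      rw [hcoef, ramanujan_id, mul_apply, Nat.sum_divisorsAntidiagonal
        (f := fun a b => En n a * ((moebius : ArithmeticFunction ℤ) : ArithmeticFunction ℂ) b),
        Finset.sum_div, Finset.sum_mul]
      refine Finset.sum_congr rfl fun d hd => ?_
      obtain ⟨hdq, hq0'⟩ := Nat.mem_divisors.mp hd
      have hd0 : d ≠ 0 := fun h => hq0' (zero_dvd_iff.mp (h ▸ hdq))
      rw [En_apply, intCoe_apply]
      by_cases hdn : d ∣ n
      · rw [if_pos ⟨hdn, hd0⟩, if_pos ⟨hn, hdn⟩]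
      · rw [if_neg (fun h => hdn h.1), if_neg (fun h => hdn h.2)]
        simp
    · rw [if_neg hn]
      symm
      apply Finset.sum_eq_zero
      intro d _
      rw [if_neg (fun h => hn h.1), mul_zero]
  rw [tsum_congr step1]
  rw [Summable.tsum_finsetSum (fun d _ => (summable_smooth_dvd y hy0 hs d).mul_left _)]
  have step3 : ∀ d ∈ q₀.divisors,
      (∑' n : ℕ, ((d : ℂ) * ((moebius (q₀ / d) : ℤ) : ℂ) / (Nat.totient q₀ : ℂ)) *
        (if SmoothNum y n ∧ d ∣ n then (n : ℂ) ^ (-s) else 0))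
      = ((d : ℂ) * (d : ℂ) ^ (-s) * ((moebius (q₀ / d) : ℤ) : ℂ) / (Nat.totient q₀ : ℂ)) *
          zetaC s y := by
    intro d hd
    obtain ⟨hdq, hq0'⟩ := Nat.mem_divisors.mp hd
    have hd0 : d ≠ 0 := fun h => hq0' (zero_dvd_iff.mp (h ▸ hdq))
    rw [tsum_mul_left, tsum_smooth_dvd y hy0 hd0 (hsm.of_dvd hdq)]
    unfold zetaC
    ring
  rw [Finset.sum_congr rfl step3, ← Finset.sum_mul, ← Finset.sum_div]
  have step4 : (∑ d ∈ q₀.divisors,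
      (d : ℂ) * (d : ℂ) ^ (-s) * ((moebius (q₀ / d) : ℤ) : ℂ)) = G2 s q₀ := by
    rw [← G_eq s, mul_apply, Nat.sum_divisorsAntidiagonal
      (f := fun a b => G1 s a * ((moebius : ArithmeticFunction ℤ) : ArithmeticFunction ℂ) b)]
    refine Finset.sum_congr rfl fun d _ => ?_
    rw [G1_apply, intCoe_apply]
  rw [step4, G2_apply]
  rw [mul_comm ((Nat.totient q₀ : ℂ)) ((q₀:ℂ) ^ (-s)), mul_assoc, mul_comm ((Nat.totient q₀ : ℂ)),
    ← mul_assoc, mul_div_assoc, div_self hφ0, mul_one]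

/-- The Euler-product identity for `ζ(s;y,q₀)` and the reduction
`M_Φ(x,y;q,β) = (μ(q₁)/φ(q₁)) M_Φ(x,y;q₀,β)`. -/
theorem zetaYQ_factorization :
    (∀ (y : ℝ) (q₀ : ℕ) (s : ℂ), 2 ≤ y → 1 ≤ q₀ → SmoothNum y q₀ → 0 < s.re →
      (∑' n : ℕ,
          if SmoothNum y n then
            ((ArithmeticFunction.moebius (q₀ / Nat.gcd q₀ n) : ℤ) : ℂ) /
              (Nat.totient (q₀ / Nat.gcd q₀ n) : ℂ) * (n : ℂ) ^ (-s)
          else 0) =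
        (q₀ : ℂ) ^ (-s) *
          (∏ p ∈ q₀.primeFactors, (1 - ((p : ℂ) ^ s - 1) / ((p : ℂ) - 1))) *
          zetaC s y) ∧
    ∀ (Φ : ℝ → ℂ) (x y β : ℝ) (q q₀ q₁ : ℕ), HasCompactSupport Φ →
      2 ≤ y → 1 ≤ q → q = q₀ * q₁ → SmoothNum y q₀ →
      (∀ p : ℕ, p.Prime → p ∣ q₁ → y < (p : ℝ)) →
      MPhi Φ x y q β =
        ((ArithmeticFunction.moebius q₁ : ℤ) : ℂ) / (Nat.totient q₁ : ℂ) *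
          MPhi Φ x y q₀ β := by
  constructor
  · exact fun y q₀ s hy hq₀ hsm hs => zetaYQ_part1 y q₀ s hy hq₀ hsm hs
  · intro Φ x y β q q₀ q₁ hΦ hy hq hqq hsm hrough
    unfold MPhi
    rw [← tsum_mul_left]
    congr 1
    funext n
    by_cases hn : SmoothNum y n
    · rw [if_pos hn, if_pos hn]
      have hco : Nat.Coprime q₁ n := coprime_of_rough hrough hn
      have hg : Nat.gcd q n = Nat.gcd q₀ n := by
        rw [hqq, mul_comm q₀ q₁, Nat.Coprime.gcd_mul_left_cancel q₀ hco]
      set g := Nat.gcd q₀ n with hgdef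
      have hgd : g ∣ q₀ := Nat.gcd_dvd_left _ _
      have hdiv : q / Nat.gcd q n = (q₀ / g) * q₁ := by
        rw [hg, hqq, mul_comm q₀ q₁, Nat.mul_div_assoc q₁ hgd, mul_comm]
      have hcop' : Nat.Coprime (q₀ / g) q₁ := by
        have h0 : Nat.Coprime q₁ q₀ := coprime_of_rough hrough hsm
        exact (Nat.Coprime.coprime_dvd_right (Nat.div_dvd_of_dvd hgd) h0).symm
      have hμ : ArithmeticFunction.moebius ((q₀ / g) * q₁)
          = ArithmeticFunction.moebius (q₀ / g) * ArithmeticFunction.moebius q₁ :=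
        ArithmeticFunction.isMultiplicative_moebius.map_mul_of_coprime hcop'
      have hφ : Nat.totient ((q₀ / g) * q₁) = Nat.totient (q₀ / g) * Nat.totient q₁ :=
        Nat.totient_mul hcop'
      rw [hdiv, hμ, hφ]
      push_cast
      rw [mul_div_mul_comm]
      ring
    · rw [if_neg hn, if_neg hn, mul_zero]

end

end Friable
end
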